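/- arXiv:1410.7090 — 2 statements merged into one kernel-verified Lean document; each statement's English description precedes it below -/
import Mathlib

section
/- Let ω : [0,1] → ℝ be continuous with Lebesgue measure of {t ∈ [0,1] : ω(t) = 0} equal to 0, and define φ(f) = ∫₀¹ 1_{[0,∞)}(f(t)) dt for bounded measurable f : [0,1] → ℝ. Then for every ε > 0 there exists ν > 0 such that every bounded measurable ϖ : [0,1] → ℝ with sup_{t ∈ [0,1]} |ϖ(t) - ω(t)| < ν satisfies |φ(ω) - φ(ϖ)| < ε. -/
open MeasureTheory Set Filter Topology ENNReal

theorem stmt_1 (ω : ℝ → ℝ) (hω : ContinuousOn ω (Icc 0 1))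
    (hzero : volume {t ∈ Icc (0:ℝ) 1 | ω t = 0} = 0)
    (φ : (ℝ → ℝ) → ℝ)
    (hφ : ∀ f : ℝ → ℝ, φ f = (volume {t ∈ Icc (0:ℝ) 1 | 0 ≤ f t}).toReal) :
    ∀ ε > (0:ℝ), ∃ ν > (0:ℝ), ∀ ϖ : ℝ → ℝ, Measurable ϖ →
      (∀ t ∈ Icc (0:ℝ) 1, |ϖ t - ω t| < ν) → |φ ω - φ ϖ| < ε := by
  intro ε hε
  -- the shrinking "bad" sets
  set S : ℕ → Set ℝ := fun n => {t ∈ Icc (0:ℝ) 1 | |ω t| < 1/(n+1)} with hS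
  have hSmeas : ∀ n, MeasurableSet (S n) := by
    intro n
    have : IsOpen (Ioo (-(1/((n:ℝ)+1))) (1/((n:ℝ)+1))) := isOpen_Ioo
    obtain ⟨u, hu, huv⟩ := continuousOn_iff'.1 hω _ this
    have : S n = u ∩ Icc 0 1 := by
      rw [← huv]
      ext t
      simp [hS, abs_lt, and_comm, mem_Ioo]
    rw [this]
    exact hu.measurableSet.inter measurableSet_Icc
  have hanti : Antitone S := by
    intro m n hmn t ht
    refine ⟨ht.1, lt_of_lt_of_le ht.2 ?_⟩
    apply one_div_le_one_div_of_le (by positivity)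
    exact_mod_cast by simpa using Nat.succ_le_succ hmn
  have hfin : ∀ n, volume (S n) ≤ 1 := by
    intro n
    calc volume (S n) ≤ volume (Icc (0:ℝ) 1) := measure_mono fun t ht => ht.1
    _ = 1 := by simp
  have hiInter : volume (⋂ n, S n) = 0 := by
    refine le_antisymm (le_trans (measure_mono ?_) hzero.le) zero_le
    intro t ht
    simp only [mem_iInter] at ht
    refine ⟨(ht 0).1, ?_⟩
    by_contra h
    obtain ⟨n, hn⟩ := exists_nat_one_div_lt (abs_pos.2 h)
    exact absurd ((ht n).2) (not_lt.2 hn.le)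
  have htend : Tendsto (fun n => volume (S n)) atTop (𝓝 0) := by
    have := tendsto_measure_iInter_atTop (μ := volume) (s := S)
      (fun n => (hSmeas n).nullMeasurableSet) hanti
      ⟨0, by exact ne_top_of_le_ne_top one_ne_top (hfin 0)⟩
    rwa [hiInter] at this
  have : ∀ᶠ n in atTop, volume (S n) < ENNReal.ofReal ε := by
    exact htend.eventually_lt_const (ENNReal.ofReal_pos.2 hε)
  obtain ⟨n, hn⟩ := this.exists
  refine ⟨1/(n+1), by positivity, ?_⟩
  intro ϖ hϖ hclose
  set A := {t ∈ Icc (0:ℝ) 1 | 0 ≤ ω t} with hA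
  set B := {t ∈ Icc (0:ℝ) 1 | 0 ≤ ϖ t} with hB
  have hAB : A ⊆ B ∪ S n := by
    intro t ⟨ht, hωt⟩
    by_cases hb : 0 ≤ ϖ t
    · exact Or.inl ⟨ht, hb⟩
    · refine Or.inr ⟨ht, ?_⟩
      have := hclose t ht
      rw [abs_of_nonneg hωt]
      calc ω t ≤ ω t - ϖ t := by linarith
      _ ≤ |ϖ t - ω t| := by rw [abs_sub_comm]; exact le_abs_self _
      _ < _ := this
  have hBA : B ⊆ A ∪ S n := by
    intro t ⟨ht, hϖt⟩
    by_cases hb : 0 ≤ ω t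
    · exact Or.inl ⟨ht, hb⟩
    · refine Or.inr ⟨ht, ?_⟩
      have := hclose t ht
      rw [abs_of_neg (not_le.1 hb)]
      calc -ω t ≤ ϖ t - ω t := by linarith
      _ ≤ |ϖ t - ω t| := le_abs_self _
      _ < _ := this
  have hABm : volume A ≤ volume B + volume (S n) :=
    le_trans (measure_mono hAB) (measure_union_le _ _)
  have hBAm : volume B ≤ volume A + volume (S n) :=
    le_trans (measure_mono hBA) (measure_union_le _ _)
  have hAfin : volume A ≠ ⊤ := by
    refine ne_top_of_le_ne_top one_ne_top ?_
    calc volume A ≤ volume (Icc (0:ℝ) 1) := measure_mono fun t ht => ht.1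
    _ = 1 := by simp
  have hBfin : volume B ≠ ⊤ := by
    refine ne_top_of_le_ne_top one_ne_top ?_
    calc volume B ≤ volume (Icc (0:ℝ) 1) := measure_mono fun t ht => ht.1
    _ = 1 := by simp
  have hSfin : volume (S n) ≠ ⊤ := ne_top_of_le_ne_top one_ne_top (hfin n)
  have hSr : (volume (S n)).toReal < ε := by
    rw [← ENNReal.ofReal_toReal hSfin] at hn
    exact (ENNReal.ofReal_lt_ofReal_iff hε).1 hn
  have h1 : (volume A).toReal ≤ (volume B).toReal + (volume (S n)).toReal := by
    rw [← ENNReal.toReal_add hBfin hSfin]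
    exact ENNReal.toReal_mono (by finiteness) hABm
  have h2 : (volume B).toReal ≤ (volume A).toReal + (volume (S n)).toReal := by
    rw [← ENNReal.toReal_add hAfin hSfin]
    exact ENNReal.toReal_mono (by finiteness) hBAm
  rw [hφ, hφ]
  rw [abs_sub_lt_iff]
  constructor <;> linarith
end

section
/- Let g : ℕ → [0, ∞) be nonincreasing and α > 1. Then limsup_{n → ∞} (ln n)·g(n) ≤ α · limsup_{m → ∞} (ln(m+1))·g(⌈m^α⌉). -/
open Filter

private lemma key_aux (g : ℕ → ℝ) (hg0 : ∀ n, 0 ≤ g n) (hmono : Antitone g)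
    (α : ℝ) (hα : 1 < α) (c : ℝ)
    (hc : ∀ᶠ m : ℕ in atTop, Real.log (m + 1) * g ⌈(m : ℝ) ^ α⌉₊ ≤ c) :
    ∀ᶠ n : ℕ in atTop, Real.log n * g n ≤ α * c := by
  have hαpos : (0 : ℝ) < α := lt_trans one_pos hα
  have hfloor : Tendsto (fun n : ℕ => ⌊(n : ℝ) ^ α⁻¹⌋₊) atTop atTop := by
    exact tendsto_nat_floor_atTop.comp
      ((tendsto_rpow_atTop (by positivity)).comp tendsto_natCast_atTop_atTop)
  filter_upwards [hfloor.eventually hc, eventually_ge_atTop 1] with n hn hn1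
  set m := ⌊(n : ℝ) ^ α⁻¹⌋₊ with hm
  have hx0 : (0 : ℝ) ≤ (n : ℝ) ^ α⁻¹ := Real.rpow_nonneg (Nat.cast_nonneg n) _
  have h1 : ((m : ℝ)) ^ α ≤ (n : ℝ) := by
    calc ((m : ℝ)) ^ α ≤ ((n : ℝ) ^ α⁻¹) ^ α :=
          Real.rpow_le_rpow (Nat.cast_nonneg m) (Nat.floor_le hx0) hαpos.le
      _ = (n : ℝ) := Real.rpow_inv_rpow (Nat.cast_nonneg n) hαpos.ne'
  have h2 : (n : ℝ) < ((m : ℝ) + 1) ^ α := by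
    calc (n : ℝ) = ((n : ℝ) ^ α⁻¹) ^ α := (Real.rpow_inv_rpow (Nat.cast_nonneg n) hαpos.ne').symm
      _ < ((m : ℝ) + 1) ^ α :=
          Real.rpow_lt_rpow hx0 (Nat.lt_floor_add_one _) hαpos
  have hceil : ⌈(m : ℝ) ^ α⌉₊ ≤ n := by
    rw [Nat.ceil_le]; exact_mod_cast h1
  have hglog : Real.log n ≤ α * Real.log ((m : ℝ) + 1) := by
    have hn0 : (0 : ℝ) < n := by exact_mod_cast hn1
    calc Real.log n ≤ Real.log (((m : ℝ) + 1) ^ α) := Real.log_le_log hn0 h2.le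
      _ = α * Real.log ((m : ℝ) + 1) := Real.log_rpow (by positivity) α
  have hlog1 : (0 : ℝ) ≤ Real.log ((m : ℝ) + 1) :=
    Real.log_nonneg (le_add_of_nonneg_left (Nat.cast_nonneg m))
  calc Real.log n * g n ≤ (α * Real.log ((m : ℝ) + 1)) * g n :=
        mul_le_mul_of_nonneg_right hglog (hg0 n)
    _ ≤ (α * Real.log ((m : ℝ) + 1)) * g ⌈(m : ℝ) ^ α⌉₊ :=
        mul_le_mul_of_nonneg_left (hmono hceil) (by positivity)
    _ = α * (Real.log ((m : ℝ) + 1) * g ⌈(m : ℝ) ^ α⌉₊) := by ring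
    _ ≤ α * c := mul_le_mul_of_nonneg_left hn hαpos.le

theorem stmt_9 (g : ℕ → ℝ) (hg0 : ∀ n, 0 ≤ g n) (hmono : Antitone g)
    (α : ℝ) (hα : 1 < α) :
    limsup (fun n : ℕ => Real.log n * g n) atTop ≤
      α * limsup (fun m : ℕ => Real.log (m + 1) * g ⌈(m : ℝ) ^ α⌉₊) atTop := by
  have hαpos : (0 : ℝ) < α := lt_trans one_pos hα
  set h : ℕ → ℝ := fun m => Real.log (m + 1) * g ⌈(m : ℝ) ^ α⌉₊ with hh
  set f : ℕ → ℝ := fun n => Real.log n * g n with hf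
  have hfnn : ∀ᶠ n in atTop, (0 : ℝ) ≤ f n := by
    filter_upwards [eventually_ge_atTop 1] with n hn
    exact mul_nonneg (Real.log_nonneg (by exact_mod_cast hn)) (hg0 n)
  have hcob : IsCoboundedUnder (· ≤ ·) atTop f :=
    isCoboundedUnder_le_of_eventually_le atTop hfnn
  by_cases hb : IsBoundedUnder (· ≤ ·) atTop h
  · apply le_of_forall_gt_imp_ge_of_dense
    intro c hc
    have hc' : limsup h atTop < c / α := by
      rw [lt_div_iff₀ hαpos]
      linarith [hc]
    have hev : ∀ᶠ m in atTop, h m ≤ c / α := by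
      filter_upwards [eventually_lt_of_limsup_lt hc' hb] with m hm
      exact hm.le
    have := key_aux g hg0 hmono α hα (c / α) hev
    have h2 : limsup f atTop ≤ α * (c / α) := limsup_le_of_le hcob this
    rwa [mul_div_cancel₀ _ hαpos.ne'] at h2
  · -- h is unbounded; show f is also unbounded, and both limsups are 0
    have hfb : ¬ IsBoundedUnder (· ≤ ·) atTop f := by
      intro ⟨C, hC⟩
      rw [eventually_map] at hC
      apply hb
      have htend : Tendsto (fun m : ℕ => ⌈(m : ℝ) ^ α⌉₊) atTop atTop := by
        apply tendsto_atTop_mono _ tendsto_id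
        intro m
        rcases Nat.eq_zero_or_pos m with h0 | h0
        · simp [h0]
        · have h1 : (m : ℝ) ≤ (m : ℝ) ^ α := by
            calc (m : ℝ) = (m : ℝ) ^ (1 : ℝ) := (Real.rpow_one _).symm
              _ ≤ (m : ℝ) ^ α := Real.rpow_le_rpow_of_exponent_le (by exact_mod_cast h0) hα.le
          calc m = ⌈(m : ℝ)⌉₊ := (Nat.ceil_natCast m).symm
            _ ≤ ⌈(m : ℝ) ^ α⌉₊ := Nat.ceil_mono h1
      have h2m : ∀ᶠ m : ℕ in atTop, (2 : ℝ) ≤ (m : ℝ) ^ (α - 1) := by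
        have : Tendsto (fun m : ℕ => (m : ℝ) ^ (α - 1)) atTop atTop :=
          (tendsto_rpow_atTop (by linarith)).comp tendsto_natCast_atTop_atTop
        exact this.eventually_ge_atTop 2
      refine ⟨C, ?_⟩
      rw [eventually_map]
      filter_upwards [htend.eventually hC, h2m, eventually_ge_atTop 1] with m hCm h2 h1
      have hm0 : (0 : ℝ) < m := by exact_mod_cast h1
      have hle : (m : ℝ) + 1 ≤ (m : ℝ) ^ α := by
        have heq : (m : ℝ) ^ α = (m : ℝ) ^ (α - 1) * (m : ℝ) ^ (1 : ℝ) := by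
          rw [← Real.rpow_add hm0]; ring_nf
        rw [Real.rpow_one] at heq
        have hm1 : (1 : ℝ) ≤ (m : ℝ) := by exact_mod_cast h1
        rw [heq]
        nlinarith [h2, hm1]
      have hlog : Real.log ((m : ℝ) + 1) ≤ Real.log (⌈(m : ℝ) ^ α⌉₊ : ℝ) :=
        Real.log_le_log (by positivity) (hle.trans (Nat.le_ceil _))
      calc h m ≤ Real.log (⌈(m : ℝ) ^ α⌉₊ : ℝ) * g ⌈(m : ℝ) ^ α⌉₊ :=
            mul_le_mul_of_nonneg_right hlog (hg0 _)
        _ = f ⌈(m : ℝ) ^ α⌉₊ := rfl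
        _ ≤ C := hCm
    have hlimf : limsup f atTop = 0 := by
      rw [limsup_eq]
      convert Real.sInf_empty using 2
      · rfl
      rw [Set.eq_empty_iff_forall_notMem]
      intro a ha
      exact hfb ⟨a, eventually_map.mpr ha⟩
    have hlimh : limsup h atTop = 0 := by
      rw [limsup_eq]
      convert Real.sInf_empty using 2
      · rfl
      rw [Set.eq_empty_iff_forall_notMem]
      intro a ha
      exact hb ⟨a, eventually_map.mpr ha⟩
    rw [hlimf, hlimh, mul_zero]
end
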